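/- Let L be a finite group, p a prime, k a positive integer, and M = L^k the direct product of k copies of L (i.e., the group of functions Fin k → L). Let σ be a permutation of {1, …, k} and let φ be an automorphism of M that maps the i-th coordinate factor onto the σ(i)-th coordinate factor for every i. Then the number of Sylow p-subgroups Q of M with φ(Q) = Q is at most n_p(L)^s, where s is the number of orbits of ⟨σ⟩ on {1, …, k}. -/

import Mathlib

open Subgroup

section Aux

variable {L : Type*} [Group L] {p k : ℕ}

lemma aux_pi_pgroup (S : Fin k → Subgroup L) (h : ∀ j, IsPGroup p (S j)) :
    IsPGroup p (Subgroup.pi Set.univ S) := by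
  intro g
  choose n hn using fun j => h j ⟨(g : Fin k → L) j, g.2 j (Set.mem_univ j)⟩
  classical
  refine ⟨Finset.univ.sup n, ?_⟩
  ext j
  have hj : ((g : Fin k → L) j) ^ p ^ n j = 1 := congrArg Subtype.val (hn j)
  have hle : n j ≤ Finset.univ.sup n := Finset.le_sup (Finset.mem_univ j)
  calc ((g ^ p ^ Finset.univ.sup n : _) : Fin k → L) j
      = ((g : Fin k → L) j) ^ p ^ Finset.univ.sup n := rfl
    _ = (((g : Fin k → L) j) ^ p ^ n j) ^ p ^ (Finset.univ.sup n - n j) := by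
        rw [← pow_mul, ← pow_add, Nat.add_sub_cancel' hle]
    _ = 1 := by rw [hj, one_pow]

lemma aux_sylow_eq_pi (Q : Sylow p (Fin k → L)) :
    (Q : Subgroup (Fin k → L)) =
      Subgroup.pi Set.univ (fun j => (Q : Subgroup (Fin k → L)).map
        (Pi.evalMonoidHom (fun _ : Fin k => L) j)) := by
  refine (Q.3 (aux_pi_pgroup _ fun j => Q.2.map _) ?_).symm
  intro q hq
  rw [Subgroup.mem_pi]
  intro j _
  exact ⟨q, hq, rfl⟩

lemma aux_map_pi (S : Fin k → Subgroup L) (j : Fin k) :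
    (Subgroup.pi Set.univ S).map (Pi.evalMonoidHom (fun _ : Fin k => L) j) = S j := by
  classical
  apply le_antisymm
  · rintro _ ⟨q, hq, rfl⟩
    exact hq j (Set.mem_univ j)
  · intro x hx
    have hmem : Pi.mulSingle (M := fun _ : Fin k => L) j x ∈ Subgroup.pi Set.univ S := by
      rw [Subgroup.mem_pi]
      intro t _
      rcases eq_or_ne t j with ht | ht
      · subst ht; rw [Pi.mulSingle_eq_same]; exact hx
      · rw [Pi.mulSingle_eq_of_ne ht]; exact one_mem _
    exact ⟨Pi.mulSingle j x, hmem,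
      Pi.mulSingle_eq_same (M := fun _ : Fin k => L) j x⟩

lemma aux_inf_single (Q : Sylow p (Fin k → L)) (i : Fin k) :
    (Q : Subgroup (Fin k → L)) ⊓ (MonoidHom.mulSingle (fun _ : Fin k => L) i).range =
      ((Q : Subgroup (Fin k → L)).map (Pi.evalMonoidHom (fun _ : Fin k => L) i)).map
        (MonoidHom.mulSingle (fun _ : Fin k => L) i) := by
  classical
  apply le_antisymm
  · rintro f ⟨hfQ, x, rfl⟩
    refine ⟨x, ⟨_, hfQ, ?_⟩, rfl⟩
    exact Pi.mulSingle_eq_same (M := fun _ : Fin k => L) i x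
  · rintro _ ⟨x, hx, rfl⟩
    have hmem : (MonoidHom.mulSingle (fun _ : Fin k => L) i) x ∈
        (Q : Subgroup (Fin k → L)) := by
      rw [aux_sylow_eq_pi Q, Subgroup.mem_pi]
      intro t _
      show Pi.mulSingle (M := fun _ : Fin k => L) i x t ∈
        (Q : Subgroup (Fin k → L)).map (Pi.evalMonoidHom (fun _ : Fin k => L) t)
      rcases eq_or_ne t i with ht | ht
      · subst ht; rw [Pi.mulSingle_eq_same]; exact hx
      · rw [Pi.mulSingle_eq_of_ne ht]; exact one_mem _
    exact ⟨hmem, x, rfl⟩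

/-- Projection of a Sylow subgroup of a product is a Sylow subgroup. -/
def projSylow (Q : Sylow p (Fin k → L)) (j : Fin k) : Sylow p L where
  toSubgroup := (Q : Subgroup (Fin k → L)).map (Pi.evalMonoidHom (fun _ : Fin k => L) j)
  isPGroup' := Q.2.map _
  is_maximal' := by
    classical
    intro R hR hle
    have heq : Subgroup.pi Set.univ (fun t => if t = j then R else
        (Q : Subgroup (Fin k → L)).map (Pi.evalMonoidHom (fun _ : Fin k => L) t)) = Q := by
      apply Q.3
      · apply aux_pi_pgroup
        intro t
        rcases eq_or_ne t j with ht | ht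
        · rw [if_pos ht]; exact hR
        · rw [if_neg ht]; exact Q.2.map _
      · intro q hq
        rw [Subgroup.mem_pi]
        intro t _
        show q t ∈ (if t = j then R else
          (Q : Subgroup (Fin k → L)).map (Pi.evalMonoidHom (fun _ : Fin k => L) t))
        rcases eq_or_ne t j with ht | ht
        · rw [if_pos ht]; subst ht; exact hle ⟨q, hq, rfl⟩
        · rw [if_neg ht]; exact ⟨q, hq, rfl⟩
    have h2 := congrArg (Subgroup.map (Pi.evalMonoidHom (fun _ : Fin k => L) j)) heq
    rw [aux_map_pi, if_pos rfl] at h2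
    exact h2

end Aux

/-- Lemma: let `M = L^k`, `σ` a permutation of the coordinates and `φ` an automorphism
of `M` mapping the `i`-th coordinate factor onto the `σ(i)`-th one for every `i`.
Then the number of `φ`-invariant Sylow `p`-subgroups of `M` is at most `n_p(L)^s`,
where `s` is the number of orbits of `⟨σ⟩` on the coordinates. -/
theorem card_invariant_sylow_le {L : Type*} [Group L] [Fintype L]
    (p : ℕ) (hp : p.Prime) (k : ℕ) (hk : 0 < k)
    (σ : Equiv.Perm (Fin k)) (φ : (Fin k → L) ≃* (Fin k → L))
    (hφ : ∀ i : Fin k,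
      ((MonoidHom.mulSingle (fun _ : Fin k => L) i).range).map φ.toMonoidHom =
        (MonoidHom.mulSingle (fun _ : Fin k => L) (σ i)).range) :
    Nat.card {Q : Sylow p (Fin k → L) //
        (Q : Subgroup (Fin k → L)).map φ.toMonoidHom = (Q : Subgroup (Fin k → L))} ≤
      Nat.card (Sylow p L) ^
        Nat.card (MulAction.orbitRel.Quotient (zpowers σ) (Fin k)) := by
  classical
  -- key step: for an invariant Q, the (σ i)-th projection is determined by the i-th one
  have key : ∀ (Q : Sylow p (Fin k → L)),
      (Q : Subgroup (Fin k → L)).map φ.toMonoidHom = (Q : Subgroup (Fin k → L)) →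
      ∀ i : Fin k, (Q : Subgroup (Fin k → L)).map (Pi.evalMonoidHom (fun _ : Fin k => L) (σ i)) =
        ((((Q : Subgroup (Fin k → L)).map (Pi.evalMonoidHom (fun _ : Fin k => L) i)).map
          (MonoidHom.mulSingle (fun _ : Fin k => L) i)).map φ.toMonoidHom).map
          (Pi.evalMonoidHom (fun _ : Fin k => L) (σ i)) := by
    intro Q hQ i
    have h1 : (((Q : Subgroup (Fin k → L)) ⊓
        (MonoidHom.mulSingle (fun _ : Fin k => L) i).range).map φ.toMonoidHom) =
        (Q : Subgroup (Fin k → L)) ⊓ (MonoidHom.mulSingle (fun _ : Fin k => L) (σ i)).range := by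
      rw [Subgroup.map_inf _ _ _ φ.injective, hQ, hφ i]
    rw [aux_inf_single Q i, aux_inf_single Q (σ i)] at h1
    have h2 : ∀ (T : Subgroup L) (j : Fin k),
        (T.map (MonoidHom.mulSingle (fun _ : Fin k => L) j)).map
          (Pi.evalMonoidHom (fun _ : Fin k => L) j) = T := by
      intro T j
      rw [Subgroup.map_map]
      have heq : (Pi.evalMonoidHom (fun _ : Fin k => L) j).comp
          (MonoidHom.mulSingle (fun _ : Fin k => L) j) = MonoidHom.id L := by
        ext x; exact Pi.mulSingle_eq_same (M := fun _ : Fin k => L) j x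
      rw [heq, Subgroup.map_id]
    conv_lhs => rw [← h2 ((Q : Subgroup (Fin k → L)).map
      (Pi.evalMonoidHom (fun _ : Fin k => L) (σ i))) (σ i)]
    rw [← h1]
  -- the injection
  set f : {Q : Sylow p (Fin k → L) //
      (Q : Subgroup (Fin k → L)).map φ.toMonoidHom = (Q : Subgroup (Fin k → L))} →
      (MulAction.orbitRel.Quotient (zpowers σ) (Fin k) → Sylow p L) :=
    fun Q o => projSylow Q.1 o.out with hf
  have hinj : Function.Injective f := by
    intro Q Q' h
    have hrep : ∀ o : MulAction.orbitRel.Quotient (zpowers σ) (Fin k),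
        (Q.1 : Subgroup (Fin k → L)).map (Pi.evalMonoidHom (fun _ : Fin k => L) o.out) =
          (Q'.1 : Subgroup (Fin k → L)).map (Pi.evalMonoidHom (fun _ : Fin k => L) o.out) :=
      fun o => congrArg (fun s : Sylow p L => (s : Subgroup L)) (congrFun h o)
    have hstep : ∀ i : Fin k,
        (Q.1 : Subgroup (Fin k → L)).map (Pi.evalMonoidHom (fun _ : Fin k => L) i) =
          (Q'.1 : Subgroup (Fin k → L)).map (Pi.evalMonoidHom (fun _ : Fin k => L) i) →
        (Q.1 : Subgroup (Fin k → L)).map (Pi.evalMonoidHom (fun _ : Fin k => L) (σ i)) =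
          (Q'.1 : Subgroup (Fin k → L)).map (Pi.evalMonoidHom (fun _ : Fin k => L) (σ i)) := by
      intro i hi
      rw [key Q.1 Q.2 i, key Q'.1 Q'.2 i, hi]
    have hpow : ∀ (n : ℕ) (i : Fin k),
        (Q.1 : Subgroup (Fin k → L)).map (Pi.evalMonoidHom (fun _ : Fin k => L) i) =
          (Q'.1 : Subgroup (Fin k → L)).map (Pi.evalMonoidHom (fun _ : Fin k => L) i) →
        (Q.1 : Subgroup (Fin k → L)).map (Pi.evalMonoidHom (fun _ : Fin k => L) ((σ ^ n) i)) =
          (Q'.1 : Subgroup (Fin k → L)).map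
            (Pi.evalMonoidHom (fun _ : Fin k => L) ((σ ^ n) i)) := by
      intro n
      induction n with
      | zero => intro i hi; simpa using hi
      | succ n ih =>
        intro i hi
        have hss : (σ ^ (n + 1)) i = σ ((σ ^ n) i) := by
          rw [pow_succ']; rfl
        rw [hss]
        exact hstep _ (ih i hi)
    have hproj : ∀ j : Fin k,
        (Q.1 : Subgroup (Fin k → L)).map (Pi.evalMonoidHom (fun _ : Fin k => L) j) =
          (Q'.1 : Subgroup (Fin k → L)).map (Pi.evalMonoidHom (fun _ : Fin k => L) j) := by
      intro j
      set o : MulAction.orbitRel.Quotient (zpowers σ) (Fin k) := Quotient.mk'' j with ho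
      have hr : (MulAction.orbitRel (zpowers σ) (Fin k)) o.out j := by
        apply Quotient.eq''.mp
        rw [ho, Quotient.out_eq']
      have hrel : j ∈ MulAction.orbit (zpowers σ) o.out :=
        MulAction.orbitRel_apply.mp ((MulAction.orbitRel (zpowers σ) (Fin k)).iseqv.symm hr)
      obtain ⟨g, hg⟩ := hrel
      obtain ⟨m, hm⟩ := Subgroup.mem_zpowers_iff.mp g.2
      have hj : (σ ^ m) (Quotient.out o) = j := by rw [hm]; exact hg
      have hord : 0 < orderOf σ := orderOf_pos σ
      have hmod : σ ^ m = σ ^ (m % (orderOf σ : ℤ)).toNat := by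
        rw [← zpow_natCast, Int.toNat_of_nonneg
          (Int.emod_nonneg m (by exact_mod_cast hord.ne'))]
        exact (zpow_mod_orderOf σ m).symm
      rw [hmod] at hj
      rw [← hj]
      exact hpow _ _ (hrep o)
    have hQQ : (Q.1 : Subgroup (Fin k → L)) = (Q'.1 : Subgroup (Fin k → L)) := by
      rw [aux_sylow_eq_pi Q.1, aux_sylow_eq_pi Q'.1]
      congr 1
      funext j
      exact hproj j
    exact Subtype.ext (Sylow.ext hQQ)
  calc Nat.card {Q : Sylow p (Fin k → L) //
        (Q : Subgroup (Fin k → L)).map φ.toMonoidHom = (Q : Subgroup (Fin k → L))}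
      ≤ Nat.card (MulAction.orbitRel.Quotient (zpowers σ) (Fin k) → Sylow p L) :=
        Nat.card_le_card_of_injective f hinj
    _ = Nat.card (Sylow p L) ^
        Nat.card (MulAction.orbitRel.Quotient (zpowers σ) (Fin k)) := Nat.card_fun
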